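/- With the setup of the discrete Sobolev bilinear form ⟨p,q⟩ = ∫pq dν + ℙ(λ) M ℚ(λ)^T (where ℙ(λ) = (p(λ),...,p^{(m-1)}(λ))), if a sequence (q_n) of left orthogonal polynomials with respect to ⟨·,·⟩ exists, then each q_n, when normalized to have the same leading coefficient as p_n, can be written as q_n = Σ_{j=0}^m β_{n,j} p_{n-j} with β_{n,0} = 1, i.e., q_n is a linear combination of at most m+1 consecutive orthogonal polynomials p_{n-m},...,p_n with respect to (x-λ)^m ν. -/

import Mathlib

open Polynomial Finset MeasureTheory

/-- Polynomial sequence indexed by ℤ, with the convention p_k = 0 for k < 0. -/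
noncomputable def pZ (p : ℕ → Polynomial ℝ) (k : ℤ) : Polynomial ℝ :=
  if k < 0 then 0 else p k.toNat

/-- The discrete Sobolev bilinear form
⟨P,Q⟩ = ∫ P Q dν + (P(λ),...,P^{(m-1)}(λ)) M (Q(λ),...,Q^{(m-1)}(λ))ᵀ. -/
noncomputable def sobolevForm (ν : Measure ℝ) (lam : ℝ) (m : ℕ)
    (M : Matrix (Fin m) (Fin m) ℝ) (P Q : Polynomial ℝ) : ℝ :=
  (∫ x, P.eval x * Q.eval x ∂ν) +
    ∑ i : Fin m, ∑ j : Fin m,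
      ((Polynomial.derivative)^[(i : ℕ)] P).eval lam * M i j *
        ((Polynomial.derivative)^[(j : ℕ)] Q).eval lam

/-- R_{l+1}(n) = w_{n,l} + l! ∑_{i=0}^{m-1} M_{l,i} p_n^{(i)}(λ), where
w_{n,l} = ∫ (x-λ)^l p_n dν  (with p_n = 0 for n < 0). -/
noncomputable def sobolevR (ν : Measure ℝ) (lam : ℝ) (m : ℕ)
    (M : Matrix (Fin m) (Fin m) ℝ) (p : ℕ → Polynomial ℝ) (l : Fin m) (n : ℤ) : ℝ :=
  (∫ x, (x - lam) ^ (l : ℕ) * (pZ p n).eval x ∂ν) +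
    (Nat.factorial l) * ∑ i : Fin m, M l i *
      ((Polynomial.derivative)^[(i : ℕ)] (pZ p n)).eval lam

/-- The Casorati determinant Ω(n) = det(R_i(n-j))_{i,j=1}^m. -/
noncomputable def sobolevOmega (ν : Measure ℝ) (lam : ℝ) (m : ℕ)
    (M : Matrix (Fin m) (Fin m) ℝ) (p : ℕ → Polynomial ℝ) (n : ℤ) : ℝ :=
  Matrix.det (Matrix.of fun i j : Fin m => sobolevR ν lam m M p i (n - (j : ℤ) - 1))

/-- The candidate discrete Sobolev orthogonal polynomial q_n, given as the
(m+1)×(m+1) determinant with first row (p_n, p_{n-1}, ..., p_{n-m}) and remaining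
rows (R_l(n), R_l(n-1), ..., R_l(n-m)), l = 1,...,m. -/
noncomputable def sobolevQ (ν : Measure ℝ) (lam : ℝ) (m : ℕ)
    (M : Matrix (Fin m) (Fin m) ℝ) (p : ℕ → Polynomial ℝ) (n : ℕ) : Polynomial ℝ :=
  Matrix.det (Matrix.of fun i j : Fin (m + 1) =>
    if h : (i : ℕ) = 0 then pZ p ((n : ℤ) - (j : ℤ))
    else Polynomial.C (sobolevR ν lam m M p ⟨(i : ℕ) - 1, by omega⟩ ((n : ℤ) - (j : ℤ))))


lemma aux_integrable (ν : Measure ℝ) (hmom : ∀ k : ℕ, Integrable (fun x => x ^ k) ν)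
    (P : Polynomial ℝ) : Integrable (fun x => P.eval x) ν := by
  have h : (fun x => P.eval x)
      = fun x => ∑ i ∈ Finset.range (P.natDegree + 1), P.coeff i * x ^ i := by
    funext x; rw [Polynomial.eval_eq_sum_range]
  rw [h]
  exact integrable_finset_sum _ (fun i _ => (hmom i).const_mul _)

lemma aux_span (p : ℕ → Polynomial ℝ) (hpdeg : ∀ n, (p n).degree = (n : ℕ)) :
    ∀ N : ℕ, ∀ f : Polynomial ℝ, f.degree < (N : ℕ) →
      ∃ c : ℕ → ℝ, f = ∑ k ∈ Finset.range N, c k • p k := by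
  intro N
  induction N with
  | zero =>
    intro f hf
    refine ⟨0, ?_⟩
    have : f = 0 := by
      rw [← Polynomial.degree_eq_bot]
      exact Nat.WithBot.lt_zero_iff.mp (by exact_mod_cast hf)
    simp [this]
  | succ N ih =>
    intro f hf
    have hpN0 : p N ≠ 0 := by
      intro h
      have := hpdeg N
      rw [h, Polynomial.degree_zero] at this
      exact (by simp : ((N : WithBot ℕ)) ≠ ⊥) this.symm
    have hnd : (p N).natDegree = N := Polynomial.natDegree_eq_of_degree_eq_some (hpdeg N)
    have hl : (p N).coeff N ≠ 0 := by
      have h := Polynomial.leadingCoeff_ne_zero.mpr hpN0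
      rwa [Polynomial.leadingCoeff, hnd] at h
    set a := f.coeff N / (p N).coeff N with ha
    have hfle : ∀ k : ℕ, N < k → f.coeff k = 0 := by
      intro k hk
      by_cases hf0 : f = 0
      · simp [hf0]
      · apply Polynomial.coeff_eq_zero_of_natDegree_lt
        have : f.natDegree < N + 1 := by
          rw [Polynomial.natDegree_lt_iff_degree_lt hf0]; exact_mod_cast hf
        omega
    have hg : (f - a • p N).degree < (N : ℕ) := by
      apply Polynomial.degree_lt_iff_coeff_zero _ _ |>.mpr
      intro k hk
      rcases eq_or_lt_of_le hk with hk' | hk'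
      · simp only [Polynomial.coeff_sub, Polynomial.coeff_smul, smul_eq_mul]
        have : k = N := by exact_mod_cast hk'.symm
        subst this
        rw [ha, div_mul_cancel₀ _ hl, sub_self]
      · have hkN : N < k := by exact_mod_cast hk'
        have h1 : f.coeff k = 0 := hfle k hkN
        have h2 : (p N).coeff k = 0 :=
          Polynomial.coeff_eq_zero_of_degree_lt (by rw [hpdeg N]; exact_mod_cast hkN)
        simp [h1, h2]
    obtain ⟨c, hc⟩ := ih (f - a • p N) hg
    refine ⟨Function.update c N a, ?_⟩
    rw [Finset.sum_range_succ, Function.update_self]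
    rw [Finset.sum_congr rfl (fun k hk => by
      rw [Function.update_of_ne (Finset.mem_range.mp hk).ne])]
    rw [← hc]; ring

lemma aux_deriv_zero (lam : ℝ) (m i : ℕ) (hi : i < m) (R : Polynomial ℝ) :
    ((Polynomial.derivative)^[i] ((X - C lam) ^ m * R)).eval lam = 0 := by
  have hdvd : (X - C lam) ^ (m - i) ∣ (Polynomial.derivative)^[i] ((X - C lam) ^ m * R) :=
    Polynomial.pow_sub_dvd_iterate_derivative_of_pow_dvd i (Dvd.intro R rfl)
  obtain ⟨S, hS⟩ := hdvd
  rw [hS]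
  simp [Polynomial.eval_pow, zero_pow (Nat.sub_ne_zero_of_lt hi)]

/-- If a sequence (q_n) of left orthogonal polynomials for the discrete Sobolev bilinear
form exists, then each q_n, normalized to have the same leading coefficient as p_n, is a
linear combination q_n = ∑_{j=0}^m β_{n,j} p_{n-j} with β_{n,0} = 1 of at most m+1
consecutive orthogonal polynomials for (x-λ)^m ν. -/
theorem sobolev_consecutive_combination (ν : Measure ℝ)
    (hmom : ∀ k : ℕ, Integrable (fun x => x ^ k) ν)
    (lam : ℝ) (m : ℕ) (hm : 1 ≤ m) (M : Matrix (Fin m) (Fin m) ℝ)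
    (p : ℕ → Polynomial ℝ) (hpdeg : ∀ n, (p n).degree = (n : ℕ))
    (hporth : ∀ n : ℕ, ∀ r : Polynomial ℝ, r.degree < (n : ℕ) →
      ∫ x, (x - lam) ^ m * (p n).eval x * r.eval x ∂ν = 0)
    (hpnorm : ∀ n : ℕ, ∫ x, (x - lam) ^ m * ((p n).eval x) ^ 2 ∂ν ≠ 0)
    (q : ℕ → Polynomial ℝ) (hqdeg : ∀ n, (q n).degree = (n : ℕ))
    (hqorth : ∀ n : ℕ, ∀ r : Polynomial ℝ, r.degree < (n : ℕ) →
      sobolevForm ν lam m M (q n) r = 0)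
    (hqnorm : ∀ n : ℕ, sobolevForm ν lam m M (q n) (q n) ≠ 0) :
    ∀ n : ℕ, ∃ β : Fin (m + 1) → ℝ, β 0 = 1 ∧
      ((p n).leadingCoeff / (q n).leadingCoeff) • q n
        = ∑ j : Fin (m + 1), β j • pZ p ((n : ℤ) - (j : ℤ)) := by
  intro n
  have hq0 : q n ≠ 0 := by
    intro h
    have := hqdeg n
    rw [h, Polynomial.degree_zero] at this
    exact (by simp : ((n : WithBot ℕ)) ≠ ⊥) this.symm
  have hp0 : p n ≠ 0 := by
    intro h
    have := hpdeg n
    rw [h, Polynomial.degree_zero] at this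
    exact (by simp : ((n : WithBot ℕ)) ≠ ⊥) this.symm
  have hql : (q n).leadingCoeff ≠ 0 := Polynomial.leadingCoeff_ne_zero.mpr hq0
  have hpl : (p n).leadingCoeff ≠ 0 := Polynomial.leadingCoeff_ne_zero.mpr hp0
  set r : ℝ := (p n).leadingCoeff / (q n).leadingCoeff with hr
  have hr0 : r ≠ 0 := div_ne_zero hpl hql
  set qt : Polynomial ℝ := r • q n with hqt0
  have hqt0' : qt ≠ 0 := smul_ne_zero hr0 hq0
  have hqCmul : qt = Polynomial.C r * q n := by rw [hqt0, Polynomial.smul_eq_C_mul]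
  have hqtdeg : qt.degree = (n : ℕ) := by
    rw [hqCmul, Polynomial.degree_mul, Polynomial.degree_C hr0, zero_add, hqdeg]
  have hqtlead : qt.leadingCoeff = (p n).leadingCoeff := by
    rw [hqCmul, Polynomial.leadingCoeff_mul, Polynomial.leadingCoeff_C, hr,
      div_mul_cancel₀ _ hql]
  have hsub : (qt - p n).degree < (n : ℕ) := by
    have := Polynomial.degree_sub_lt (hqtdeg.trans (hpdeg n).symm) hqt0' hqtlead
    rwa [hqtdeg] at this
  obtain ⟨c, hc⟩ := aux_span p hpdeg n (qt - p n) hsub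
  set c' : ℕ → ℝ := Function.update c n 1 with hc'
  have hqt : qt = ∑ k ∈ Finset.range (n + 1), c' k • p k := by
    rw [Finset.sum_range_succ, hc', Function.update_self]
    rw [Finset.sum_congr rfl (fun k hk => by
      rw [Function.update_of_ne (Finset.mem_range.mp hk).ne])]
    rw [← hc, one_smul, sub_add_cancel]
  -- key orthogonality step
  have hczero : ∀ k : ℕ, k + m < n → c' k = 0 := by
    intro k hkm
    have hkn : k < n := by omega
    set T : Polynomial ℝ := (X - C lam) ^ m * p k with hT
    have hTdeg : T.degree = ((m + k : ℕ) : WithBot ℕ) := by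
      rw [hT, Polynomial.degree_mul, Polynomial.degree_pow, Polynomial.degree_X_sub_C,
        hpdeg k]
      push_cast
      rw [nsmul_eq_mul, mul_one]
    have h0 : sobolevForm ν lam m M (q n) T = 0 := by
      apply hqorth n T
      rw [hTdeg]
      exact_mod_cast (by omega : m + k < n)
    have hder : ∀ j : Fin m, ((Polynomial.derivative)^[(j : ℕ)] T).eval lam = 0 := by
      intro j; rw [hT]; exact aux_deriv_zero lam m j j.isLt (p k)
    have h1 : ∫ x, (q n).eval x * T.eval x ∂ν = 0 := by
      have h := h0
      simp only [sobolevForm, hder, mul_zero, Finset.sum_const_zero, add_zero] at h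
      exact h
    have h2 : ∫ x, (T * qt).eval x ∂ν = 0 := by
      have heq : (fun x => (T * qt).eval x) = fun x => r * ((q n).eval x * T.eval x) := by
        funext x
        simp only [hqt0, Polynomial.eval_mul, Polynomial.eval_smul, smul_eq_mul]
        ring
      rw [heq, MeasureTheory.integral_const_mul, h1, mul_zero]
    have h3 : ∫ x, (T * qt).eval x ∂ν
        = ∑ j ∈ Finset.range (n + 1), c' j * ∫ x, (T * p j).eval x ∂ν := by
      have hexp : T * qt = ∑ j ∈ Finset.range (n + 1), c' j • (T * p j) := by
        rw [hqt, Finset.mul_sum]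
        exact Finset.sum_congr rfl (fun j _ => mul_smul_comm _ _ _)
      rw [hexp]
      have heq : (fun x => (∑ j ∈ Finset.range (n + 1), c' j • (T * p j)).eval x)
          = fun x => ∑ j ∈ Finset.range (n + 1), c' j * (T * p j).eval x := by
        funext x
        simp [Polynomial.eval_finset_sum]
      rw [heq, MeasureTheory.integral_finset_sum _
        (fun j _ => (aux_integrable ν hmom (T * p j)).const_mul _)]
      exact Finset.sum_congr rfl (fun j _ => MeasureTheory.integral_const_mul _ _)
    have h4 : ∀ j ∈ Finset.range (n + 1), j ≠ k → ∫ x, (T * p j).eval x ∂ν = 0 := by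
      intro j _ hjk
      rcases lt_or_gt_of_ne hjk with hlt | hgt
      · have heq : (fun x => (T * p j).eval x)
            = fun x => (x - lam) ^ m * (p k).eval x * (p j).eval x := by
          funext x
          simp only [hT, Polynomial.eval_mul, Polynomial.eval_pow, Polynomial.eval_sub,
            Polynomial.eval_X, Polynomial.eval_C]
        rw [heq]
        exact hporth k (p j) (by rw [hpdeg j]; exact_mod_cast hlt)
      · have heq : (fun x => (T * p j).eval x)
            = fun x => (x - lam) ^ m * (p j).eval x * (p k).eval x := by
          funext x
          simp only [hT, Polynomial.eval_mul, Polynomial.eval_pow, Polynomial.eval_sub,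
            Polynomial.eval_X, Polynomial.eval_C]
          ring
        rw [heq]
        exact hporth j (p k) (by rw [hpdeg k]; exact_mod_cast hgt)
    have h5 : ∫ x, (T * p k).eval x ∂ν = ∫ x, (x - lam) ^ m * ((p k).eval x) ^ 2 ∂ν := by
      have heq : (fun x => (T * p k).eval x)
          = fun x => (x - lam) ^ m * ((p k).eval x) ^ 2 := by
        funext x
        simp only [hT, Polynomial.eval_mul, Polynomial.eval_pow, Polynomial.eval_sub,
          Polynomial.eval_X, Polynomial.eval_C]
        ring
      rw [heq]
    have h6 : c' k * ∫ x, (x - lam) ^ m * ((p k).eval x) ^ 2 ∂ν = 0 := by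
      rw [← h5]
      have h := h3
      rw [h2, Finset.sum_eq_single_of_mem k (Finset.mem_range.mpr (by omega))
        (fun j hj hjk => by rw [h4 j hj hjk, mul_zero])] at h
      exact h.symm
    exact (mul_eq_zero.mp h6).resolve_right (hpnorm k)
  -- assemble β
  refine ⟨fun j => if (j : ℕ) ≤ n then c' (n - (j : ℕ)) else 0, ?_, ?_⟩
  · simp [hc', Function.update_self]
  · show qt = _
    rw [hqt]
    have hRHS : ∑ j : Fin (m + 1),
        (if (j : ℕ) ≤ n then c' (n - (j : ℕ)) else 0) • pZ p ((n : ℤ) - ((j : ℕ) : ℤ))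
        = ∑ j ∈ Finset.range (m + 1),
          (if j ≤ n then c' (n - j) else 0) • pZ p ((n : ℤ) - (j : ℤ)) := by
      exact Fin.sum_univ_eq_sum_range
        (fun j => (if j ≤ n then c' (n - j) else 0) • pZ p ((n : ℤ) - (j : ℤ))) (m + 1)
    rw [hRHS]
    -- rewrite RHS as a filtered sum
    have hRHS2 : ∑ j ∈ Finset.range (m + 1),
          (if j ≤ n then c' (n - j) else 0) • pZ p ((n : ℤ) - (j : ℤ))
        = ∑ j ∈ (Finset.range (m + 1)).filter (· ≤ n), c' (n - j) • p (n - j) := by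
      rw [Finset.sum_filter]
      refine Finset.sum_congr rfl (fun j _ => ?_)
      by_cases hj : j ≤ n
      · have hpz : pZ p ((n : ℤ) - (j : ℤ)) = p (n - j) := by
          unfold pZ
          rw [if_neg (by omega)]
          congr 1
          omega
        simp [hj, hpz]
      · simp [hj]
    rw [hRHS2]
    -- rewrite LHS as a filtered sum
    have hLHS : ∑ k ∈ Finset.range (n + 1), c' k • p k
        = ∑ k ∈ (Finset.range (n + 1)).filter (fun k => n ≤ k + m), c' k • p k := by
      symm
      apply Finset.sum_filter_of_ne
      intro k _ hne
      by_contra hcon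
      exact hne (by rw [hczero k (by omega), zero_smul])
    rw [hLHS]
    apply Finset.sum_nbij' (i := fun k => n - k) (j := fun j => n - j)
    · intro k hk
      simp only [Finset.mem_filter, Finset.mem_range] at hk ⊢
      omega
    · intro j hj
      simp only [Finset.mem_filter, Finset.mem_range] at hj ⊢
      omega
    · intro k hk
      simp only [Finset.mem_filter, Finset.mem_range] at hk
      omega
    · intro j hj
      simp only [Finset.mem_filter, Finset.mem_range] at hj
      omega
    · intro k hk
      simp only [Finset.mem_filter, Finset.mem_range] at hk
      have : n - (n - k) = k := by omega
      rw [this]
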